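/- For all sufficiently large M, M · exp(√(2 log M)) · Φ(√(2 log M) − 1)^{M−1} → 0 as M → ∞; more precisely Φ(√(2 log M) − 1)^{M−1} ≤ exp( − exp(√(2 log M)) / (√(2 log M)·√(4πe)) ) for large M. -/

import Mathlib

open Real MeasureTheory Filter

/-- Standard Gaussian CDF. -/
noncomputable def gaussCdf (z : ℝ) : ℝ :=
  ∫ t in Set.Iic z, Real.exp (-(t ^ 2) / 2) / Real.sqrt (2 * π)

lemma aux_gauss_tail_lb {x : ℝ} (hx : 0 < x) :
    x / (1 + x ^ 2) * Real.exp (-(x ^ 2) / 2) ≤ ∫ t in Set.Ioi x, Real.exp (-(t ^ 2) / 2) := by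
  set f : ℝ → ℝ := fun t => -(t / (1 + t ^ 2) * Real.exp (-(t ^ 2) / 2)) with hf
  set f' : ℝ → ℝ := fun t => Real.exp (-(t ^ 2) / 2) * (1 - 2 / (1 + t ^ 2) ^ 2) with hf'
  have hne : ∀ t : ℝ, (1 : ℝ) + t ^ 2 ≠ 0 := fun t => by positivity
  have hderiv : ∀ t : ℝ, HasDerivAt f (f' t) t := by
    intro t
    have h1 : HasDerivAt (fun t : ℝ => t / (1 + t ^ 2))
        ((1 * (1 + t ^ 2) - t * (2 * t)) / (1 + t ^ 2) ^ 2) t := by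
      have := (hasDerivAt_id t).div ((hasDerivAt_const t (1:ℝ)).add
        ((hasDerivAt_pow 2 t))) (hne t)
      simpa [Pi.div_def, Pi.add_def] using this
    have h2 : HasDerivAt (fun t : ℝ => Real.exp (-(t ^ 2) / 2))
        (Real.exp (-(t ^ 2) / 2) * (-t)) t := by
      have hin : HasDerivAt (fun t : ℝ => -(t ^ 2) / 2) (-t) t := by
        have := ((hasDerivAt_pow 2 t).neg).div_const 2
        simpa using this.congr_deriv (by push_cast; ring)
      simpa [mul_comm, Function.comp_def] using (Real.hasDerivAt_exp _).comp t hin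
    have hD := (h1.mul h2).neg
    have hd : (1:ℝ) + t ^ 2 ≠ 0 := hne t
    have key : ∀ E : ℝ, E * (1 - 2 / (1 + t ^ 2) ^ 2) =
        -((1 * (1 + t ^ 2) - t * (2 * t)) / (1 + t ^ 2) ^ 2 * E + t / (1 + t ^ 2) * (E * -t)) := by
      intro E; field_simp; ring
    show HasDerivAt f (Real.exp (-(t ^ 2) / 2) * (1 - 2 / (1 + t ^ 2) ^ 2)) t
    rw [key _]
    exact hD
  have hint_exp : IntegrableOn (fun t : ℝ => Real.exp (-(t ^ 2) / 2)) (Set.Ioi x) := by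
    have : Integrable (fun t : ℝ => Real.exp (-(1/2 : ℝ) * t ^ 2)) :=
      integrable_exp_neg_mul_sq (by norm_num)
    exact (this.congr (by filter_upwards with t; ring_nf)).integrableOn
  have hbound : ∀ t : ℝ, |f' t| ≤ Real.exp (-(t ^ 2) / 2) := by
    intro t
    rw [hf', abs_mul, abs_of_pos (Real.exp_pos _)]
    nth_rewrite 2 [← mul_one (Real.exp _)]
    refine mul_le_mul_of_nonneg_left ?_ (Real.exp_pos _).le
    rw [abs_le]
    constructor
    · have h2 : 2 / (1 + t ^ 2) ^ 2 ≤ 2 := by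
        rw [div_le_iff₀ (by positivity)]
        nlinarith [sq_nonneg t, sq_nonneg (t^2)]
      linarith
    · have : 0 ≤ 2 / (1 + t ^ 2) ^ 2 := by positivity
      linarith
  have hint_f' : IntegrableOn f' (Set.Ioi x) := by
    refine Integrable.mono hint_exp ?_ ?_
    · refine (Continuous.aestronglyMeasurable ?_).restrict
      refine (Real.continuous_exp.comp (by continuity)).mul (continuous_const.sub ?_)
      exact continuous_const.div (by continuity) (fun t => by positivity)
    · filter_upwards with t
      rw [norm_eq_abs, norm_eq_abs, abs_of_pos (Real.exp_pos _)]
      exact hbound t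
  have htend : Tendsto f atTop (nhds 0) := by
    apply squeeze_zero_norm (a := fun t : ℝ => Real.exp (-(t ^ 2) / 2))
    · intro t
      rw [hf, norm_neg, norm_mul, norm_eq_abs, norm_eq_abs, abs_of_pos (Real.exp_pos _)]
      nth_rewrite 2 [← one_mul (Real.exp _)]
      refine mul_le_mul_of_nonneg_right ?_ (Real.exp_pos _).le
      rw [abs_div, abs_of_pos (show (0:ℝ) < 1 + t ^ 2 by positivity), div_le_one (by positivity)]
      nlinarith [sq_nonneg (|t| - 1), sq_abs t]
    · apply Real.tendsto_exp_atBot.comp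
      apply Tendsto.atBot_div_const (by norm_num : (0:ℝ) < 2)
      exact tendsto_neg_atBot_iff.mpr (tendsto_pow_atTop two_ne_zero)
  have hFTC : ∫ t in Set.Ioi x, f' t = 0 - f x :=
    integral_Ioi_of_hasDerivAt_of_tendsto' (fun t _ => hderiv t) hint_f' htend
  have hmono : ∫ t in Set.Ioi x, f' t ≤ ∫ t in Set.Ioi x, Real.exp (-(t ^ 2) / 2) := by
    refine setIntegral_mono_on hint_f' hint_exp measurableSet_Ioi ?_
    intro t _
    have h0 : 0 ≤ 2 / (1 + t ^ 2) ^ 2 := by positivity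
    simp only [hf']
    nth_rewrite 2 [← mul_one (Real.exp _)]
    exact mul_le_mul_of_nonneg_left (by linarith) (Real.exp_pos _).le
  rw [hFTC] at hmono
  simpa [hf] using hmono

lemma aux_int_exp : ∀ z : ℝ, IntegrableOn (fun t : ℝ => Real.exp (-(t ^ 2) / 2)) (Set.Iic z)
    ∧ IntegrableOn (fun t : ℝ => Real.exp (-(t ^ 2) / 2)) (Set.Ioi z) := by
  intro z
  have : Integrable (fun t : ℝ => Real.exp (-(1/2 : ℝ) * t ^ 2)) :=
    integrable_exp_neg_mul_sq (by norm_num)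
  have h2 : Integrable (fun t : ℝ => Real.exp (-(t ^ 2) / 2)) :=
    this.congr (by filter_upwards with t; ring_nf)
  exact ⟨h2.integrableOn, h2.integrableOn⟩

lemma aux_gauss_total : ∫ t : ℝ, Real.exp (-(t ^ 2) / 2) = Real.sqrt (2 * π) := by
  have h := integral_gaussian (1/2 : ℝ)
  simp_rw [show ∀ t : ℝ, -(t ^ 2) / 2 = -(1/2 : ℝ) * t ^ 2 from fun t => by ring]
  rw [h]
  rw [show π / (1/2 : ℝ) = 2 * π by ring]

lemma aux_gaussCdf_nonneg (z : ℝ) : 0 ≤ gaussCdf z := by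
  refine integral_nonneg fun t => ?_
  have : 0 < Real.sqrt (2 * π) := Real.sqrt_pos.mpr (by positivity)
  positivity

lemma aux_gaussCdf_le {z : ℝ} (hz : 0 < z) :
    gaussCdf z ≤ Real.exp (-(z / (1 + z ^ 2) * Real.exp (-(z ^ 2) / 2) / Real.sqrt (2 * π))) := by
  have hP : 0 < Real.sqrt (2 * π) := Real.sqrt_pos.mpr (by positivity)
  have hsplit := intervalIntegral.integral_Iic_add_Ioi (aux_int_exp z).1 (aux_int_exp z).2 (μ := volume)
  rw [aux_gauss_total] at hsplit
  have hcdf : gaussCdf z = (∫ t in Set.Iic z, Real.exp (-(t ^ 2) / 2)) / Real.sqrt (2 * π) := by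
    unfold gaussCdf; rw [integral_div]
  have h1 : gaussCdf z = 1 - (∫ t in Set.Ioi z, Real.exp (-(t ^ 2) / 2)) / Real.sqrt (2 * π) := by
    rw [hcdf, eq_sub_iff_add_eq, ← add_div, hsplit, div_self hP.ne']
  have h2 : gaussCdf z ≤ 1 - z / (1 + z ^ 2) * Real.exp (-(z ^ 2) / 2) / Real.sqrt (2 * π) := by
    rw [h1]
    have := aux_gauss_tail_lb hz
    gcongr
  exact h2.trans (Real.one_sub_le_exp_neg _)

lemma aux_sqrt_tendsto : Tendsto Real.sqrt atTop atTop := by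
  rw [tendsto_atTop_atTop]
  intro b
  refine ⟨(max b 0) ^ 2, fun a ha => ?_⟩
  calc b ≤ max b 0 := le_max_left _ _
    _ = Real.sqrt ((max b 0) ^ 2) := (Real.sqrt_sq (le_max_right b 0)).symm
    _ ≤ Real.sqrt a := Real.sqrt_le_sqrt ha

lemma aux_exp_ge_quartic {s : ℝ} (hs : 0 ≤ s) : s ^ 4 / 24 ≤ Real.exp s := by
  refine le_trans ?_ (Real.sum_le_exp_of_nonneg hs 5)
  have h2 : s ^ 4 / ((Nat.factorial 4 : ℕ) : ℝ) ≤ ∑ i ∈ Finset.range 5, s ^ i / (Nat.factorial i : ℝ) :=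
    Finset.single_le_sum (f := fun i => s ^ i / (Nat.factorial i : ℝ))
      (fun i _ => by positivity) (by norm_num)
  simpa [Nat.factorial] using h2

lemma aux_main_bound {M : ℕ} (hM : 100 ≤ M) :
    gaussCdf (Real.sqrt (2 * Real.log M) - 1) ^ (M - 1) ≤
      Real.exp (- Real.exp (Real.sqrt (2 * Real.log M)) /
        (Real.sqrt (2 * Real.log M) * Real.sqrt (4 * π * Real.exp 1))) := by
  have hMR : (100:ℝ) ≤ (M:ℝ) := by exact_mod_cast hM
  have hM0 : (0:ℝ) < M := by linarith
  have hexp45 : Real.exp 4.5 ≤ 100 := by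
    have h9 : Real.exp 9 ≤ 10000 := by
      calc Real.exp 9 = Real.exp 1 ^ (9:ℕ) := by
            rw [← Real.exp_nat_mul]; norm_num
        _ ≤ 2.7182818286 ^ (9:ℕ) :=
            pow_le_pow_left₀ (Real.exp_pos 1).le Real.exp_one_lt_d9.le 9
        _ ≤ 10000 := by norm_num
    have hmul : Real.exp 4.5 * Real.exp 4.5 = Real.exp 9 := by
      rw [← Real.exp_add]; norm_num
    nlinarith [Real.exp_pos 4.5]
  have hlog : (4.5:ℝ) ≤ Real.log M := by
    rw [Real.le_log_iff_exp_le hM0]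
    exact hexp45.trans hMR
  set s := Real.sqrt (2 * Real.log (M:ℝ)) with hsdef
  have h2log : (9:ℝ) ≤ 2 * Real.log M := by linarith
  have hs3 : (3:ℝ) ≤ s := by
    rw [hsdef, show (3:ℝ) = Real.sqrt 9 by
      rw [show (9:ℝ) = 3^2 by norm_num, Real.sqrt_sq (by norm_num : (0:ℝ) ≤ 3)]]
    exact Real.sqrt_le_sqrt h2log
  have hs0 : (0:ℝ) < s := by linarith
  have hs2 : s ^ 2 = 2 * Real.log M := Real.sq_sqrt (by linarith)
  have hexpM : Real.exp (s ^ 2 / 2) = M := by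
    rw [hs2, show 2 * Real.log (M:ℝ) / 2 = Real.log M by ring, Real.exp_log hM0]
  set x := s - 1 with hxdef
  have hx0 : (0:ℝ) < x := by rw [hxdef]; linarith
  have hP : (0:ℝ) < Real.sqrt (2 * π) := Real.sqrt_pos.mpr (by positivity)
  have hEh : (0:ℝ) < Real.exp (1/2 : ℝ) := Real.exp_pos _
  have hEs : (0:ℝ) < Real.exp s := Real.exp_pos _
  set a := x / (1 + x ^ 2) * Real.exp (-(x ^ 2) / 2) / Real.sqrt (2 * π) with hadef
  have hpow : gaussCdf x ^ (M - 1) ≤ Real.exp (-(((M:ℝ) - 1) * a)) := by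
    calc gaussCdf x ^ (M - 1) ≤ Real.exp (-a) ^ (M - 1) :=
          pow_le_pow_left₀ (aux_gaussCdf_nonneg x) (aux_gaussCdf_le hx0) _
      _ = Real.exp (-(((M - 1 : ℕ):ℝ) * a)) := by
          rw [← Real.exp_nat_mul]; ring_nf
      _ = Real.exp (-(((M:ℝ) - 1) * a)) := by
          rw [Nat.cast_sub (by omega), Nat.cast_one]
  have he : Real.exp (-(x ^ 2) / 2) = Real.exp s * (Real.exp (1/2 : ℝ))⁻¹ / M := by
    have harg : -(x ^ 2) / 2 = s + (-(1/2 : ℝ)) + (-(s ^ 2 / 2)) := by rw [hxdef]; ring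
    rw [harg, Real.exp_add, Real.exp_add, Real.exp_neg, Real.exp_neg, hexpM]
    ring
  have hW : Real.sqrt (4 * π * Real.exp 1)
      = Real.sqrt 2 * Real.sqrt (2 * π) * Real.exp (1/2 : ℝ) := by
    rw [show (4:ℝ) * π * Real.exp 1 = 2 * (2 * π) * Real.exp 1 by ring,
      Real.sqrt_mul (by positivity), Real.sqrt_mul (by norm_num), Real.exp_half]
  have hsqrt2 : (1.4:ℝ) ≤ Real.sqrt 2 := by
    rw [show (1.4:ℝ) = Real.sqrt 1.96 by
      rw [show (1.96:ℝ) = 1.4^2 by norm_num, Real.sqrt_sq (by norm_num : (0:ℝ) ≤ 1.4)]]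
    exact Real.sqrt_le_sqrt (by norm_num)
  have key2 : 1 / (Real.sqrt 2 * s) ≤ (((M:ℝ) - 1) * x) / ((M:ℝ) * (1 + x ^ 2)) := by
    rw [div_le_div_iff₀ (by positivity) (by positivity), hxdef]
    have h1 : (1.4:ℝ) * (s * (((M:ℝ) - 1) * (s - 1)))
        ≤ Real.sqrt 2 * (s * (((M:ℝ) - 1) * (s - 1))) := by
      apply mul_le_mul_of_nonneg_right hsqrt2
      have : (0:ℝ) ≤ s - 1 := by linarith
      nlinarith
    nlinarith [h1, mul_nonneg (show (0:ℝ) ≤ (M:ℝ) - 100 by linarith)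
      (show (0:ℝ) ≤ s - 3 by linarith),
      mul_nonneg (show (0:ℝ) ≤ (M:ℝ) - 100 by linarith)
      (mul_nonneg (show (0:ℝ) ≤ s - 3 by linarith) (show (0:ℝ) ≤ s - 3 by linarith))]
  have hfinal : Real.exp s / (s * Real.sqrt (4 * π * Real.exp 1)) ≤ ((M:ℝ) - 1) * a := by
    have ha_eq : ((M:ℝ) - 1) * a = (((M:ℝ) - 1) * x) / ((M:ℝ) * (1 + x ^ 2))
        * (Real.exp s / (Real.exp (1/2 : ℝ) * Real.sqrt (2 * π))) := by
      rw [hadef, he]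
      field_simp
    have hlhs : Real.exp s / (s * Real.sqrt (4 * π * Real.exp 1))
        = 1 / (Real.sqrt 2 * s) * (Real.exp s / (Real.exp (1/2 : ℝ) * Real.sqrt (2 * π))) := by
      rw [hW]
      have h2 : (0:ℝ) < Real.sqrt 2 := by norm_num [Real.sqrt_pos]
      field_simp
    rw [ha_eq, hlhs]
    exact mul_le_mul_of_nonneg_right key2 (by positivity)
  calc gaussCdf x ^ (M - 1) ≤ Real.exp (-(((M:ℝ) - 1) * a)) := hpow
    _ ≤ Real.exp (- Real.exp s / (s * Real.sqrt (4 * π * Real.exp 1))) := by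
        rw [Real.exp_le_exp, neg_div]
        exact neg_le_neg hfinal

theorem I2_vanishes :
    (∃ M₀ : ℕ, ∀ M : ℕ, M₀ ≤ M →
      gaussCdf (Real.sqrt (2 * Real.log M) - 1) ^ (M - 1) ≤
        Real.exp (- Real.exp (Real.sqrt (2 * Real.log M)) /
          (Real.sqrt (2 * Real.log M) * Real.sqrt (4 * π * Real.exp 1)))) ∧
    Tendsto (fun M : ℕ =>
        (M : ℝ) * Real.exp (Real.sqrt (2 * Real.log M)) *
          gaussCdf (Real.sqrt (2 * Real.log M) - 1) ^ (M - 1))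
      atTop (nhds 0) := by
  have hs_tendsto : Tendsto (fun M : ℕ => Real.sqrt (2 * Real.log M)) atTop atTop := by
    apply aux_sqrt_tendsto.comp
    exact Tendsto.const_mul_atTop (by norm_num : (0:ℝ) < 2)
      (Real.tendsto_log_atTop.comp tendsto_natCast_atTop_atTop)
  refine ⟨⟨100, fun M hM => aux_main_bound hM⟩, ?_⟩
  have hW0 : (0:ℝ) < Real.sqrt (4 * π * Real.exp 1) :=
    Real.sqrt_pos.mpr (by positivity)
  have hW6 : Real.sqrt (4 * π * Real.exp 1) ≤ 6 := by
    rw [show (6:ℝ) = Real.sqrt 36 by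
      rw [show (36:ℝ) = 6^2 by norm_num, Real.sqrt_sq (by norm_num : (0:ℝ) ≤ 6)]]
    apply Real.sqrt_le_sqrt
    nlinarith [Real.pi_lt_d2, Real.exp_one_lt_d9, Real.pi_pos, Real.exp_pos 1]
  apply squeeze_zero' (g := fun M : ℕ => Real.exp (-(Real.sqrt (2 * Real.log M))))
  · filter_upwards with M
    have h1 := aux_gaussCdf_nonneg (Real.sqrt (2 * Real.log M) - 1)
    positivity
  · filter_upwards [eventually_ge_atTop 100, hs_tendsto.eventually_ge_atTop 300]
      with M h100 h300
    set s := Real.sqrt (2 * Real.log (M:ℝ)) with hsdef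
    have hMR : (100:ℝ) ≤ (M:ℝ) := by exact_mod_cast h100
    have hM0 : (0:ℝ) < M := by linarith
    have hs0 : (0:ℝ) < s := by linarith
    have hlog0 : (0:ℝ) ≤ Real.log M := Real.log_nonneg (by linarith)
    have hs2 : s ^ 2 = 2 * Real.log M := by
      rw [hsdef]
      exact Real.sq_sqrt (by linarith)
    have hexpM : Real.exp (s ^ 2 / 2) = M := by
      rw [hs2, show 2 * Real.log (M:ℝ) / 2 = Real.log M by ring, Real.exp_log hM0]
    have hquart : s ^ 4 / 24 ≤ Real.exp s := aux_exp_ge_quartic hs0.le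
    have hdivlb : s ^ 3 / 144 ≤ Real.exp s / (s * Real.sqrt (4 * π * Real.exp 1)) := by
      calc s ^ 3 / 144 = s ^ 4 / 24 / (s * 6) := by
            field_simp
            ring
        _ ≤ Real.exp s / (s * 6) := by gcongr
        _ ≤ Real.exp s / (s * Real.sqrt (4 * π * Real.exp 1)) := by gcongr
    calc (M:ℝ) * Real.exp s * gaussCdf (s - 1) ^ (M - 1)
        ≤ (M:ℝ) * Real.exp s
          * Real.exp (- Real.exp s / (s * Real.sqrt (4 * π * Real.exp 1))) := by
          apply mul_le_mul_of_nonneg_left (aux_main_bound h100) (by positivity)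
      _ = Real.exp (s ^ 2 / 2 + s + - Real.exp s / (s * Real.sqrt (4 * π * Real.exp 1))) := by
          rw [Real.exp_add, Real.exp_add, hexpM]
      _ ≤ Real.exp (-s) := by
          rw [Real.exp_le_exp]
          have hcube : s ^ 2 / 2 + 2 * s ≤ s ^ 3 / 144 := by nlinarith
          have := hdivlb
          rw [neg_div] at *
          linarith
  · apply Real.tendsto_exp_atBot.comp
    exact tendsto_neg_atBot_iff.mpr hs_tendsto
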